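/- arXiv:2501.06517 — 3 statements merged into one kernel-verified Lean document; each statement's English description precedes it below -/
import Mathlib

section
/- Let X be a real normed space, let T be a bimonotone multivalued operator from X to X*, and let (u, u*) be an element of the graph of T. Let V be the linear span of {x - u : x ∈ dom T}. Then there exists a linear map A from V to the space of (not necessarily continuous) linear functionals on V which is skew symmetric (i.e. ⟨A x, y⟩ = -⟨A y, x⟩ for all x, y ∈ V) such that for every (x, x*) in the graph of T and every v ∈ V one has ⟨x* - u*, v⟩ = ⟨A (x - u), v⟩. -/
set_option maxHeartbeats 1000000
set_option synthInstance.maxHeartbeats 400000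

/-- Any bimonotone operator `T : X ⇉ X*` with `(u, u*)` in its graph coincides,
up to translation, with a skew symmetric linear operator on the span `V` of `dom T - u`. -/
theorem stmt0 (X : Type*) [NormedAddCommGroup X] [NormedSpace ℝ X]
    (T : Set (X × (X →L[ℝ] ℝ)))
    (hbi : ∀ p ∈ T, ∀ q ∈ T, (p.2 - q.2) (p.1 - q.1) = 0)
    (u : X) (ustar : X →L[ℝ] ℝ) (hu : (u, ustar) ∈ T) :
    ∃ A : (Submodule.span ℝ ((fun x => x - u) '' {x | ∃ xstar, (x, xstar) ∈ T})) →ₗ[ℝ]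
        ((Submodule.span ℝ ((fun x => x - u) '' {x | ∃ xstar, (x, xstar) ∈ T})) →ₗ[ℝ] ℝ),
      (∀ x y, A x y = - A y x) ∧
      (∀ (x : X) (xstar : X →L[ℝ] ℝ) (hx : (x, xstar) ∈ T),
        ∀ v : (Submodule.span ℝ ((fun x => x - u) '' {x | ∃ xstar, (x, xstar) ∈ T})),
          (xstar - ustar) (v : X) =
            A ⟨x - u, Submodule.subset_span ⟨x, ⟨xstar, hx⟩, rfl⟩⟩ v) := by
  classical
  set D : Set X := {x | ∃ xstar, (x, xstar) ∈ T} with hD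
  set V : Submodule ℝ X := Submodule.span ℝ ((fun x => x - u) '' D) with hV
  -- key skew identity on generators
  have key : ∀ p ∈ T, ∀ q ∈ T,
      (p.2 - ustar) (q.1 - u) = -((q.2 - ustar) (p.1 - u)) := by
    intro p hp q hq
    have h1 := hbi p hp q hq
    have h2 := hbi p hp (u, ustar) hu
    have h3 := hbi q hq (u, ustar) hu
    simp only [ContinuousLinearMap.coe_sub', Pi.sub_apply, map_sub] at h1 h2 h3 ⊢
    linarith
  have memV : ∀ q : ↥T, (q : X × (X →L[ℝ] ℝ)).1 - u ∈ V := fun q =>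
    Submodule.subset_span ⟨q.1.1, ⟨q.1.2, q.2⟩, rfl⟩
  let res : (X →L[ℝ] ℝ) → (V →ₗ[ℝ] ℝ) := fun f => f.toLinearMap.comp V.subtype
  let π : (↥T →₀ ℝ) →ₗ[ℝ] X :=
    Finsupp.linearCombination ℝ (fun p : ↥T => (p : X × (X →L[ℝ] ℝ)).1 - u)
  let ψ : (↥T →₀ ℝ) →ₗ[ℝ] (V →ₗ[ℝ] ℝ) :=
    Finsupp.linearCombination ℝ (fun p : ↥T => res ((p : X × (X →L[ℝ] ℝ)).2 - ustar))
  have hmem : ∀ c, π c ∈ V := by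
    intro c
    have h : π c ∈ LinearMap.range π := ⟨c, rfl⟩
    rw [Finsupp.range_linearCombination] at h
    refine Submodule.span_mono ?_ h
    rintro z ⟨p, rfl⟩
    exact ⟨p.1.1, ⟨p.1.2, p.2⟩, rfl⟩
  let π' : (↥T →₀ ℝ) →ₗ[ℝ] V := π.codRestrict V hmem
  have hπ'c : ∀ c, ((π' c : V) : X) = π c := fun c => rfl
  have hsurj : Function.Surjective π' := by
    intro v
    have hv : (v : X) ∈ Submodule.span ℝ ((fun x => x - u) '' D) := v.2
    have : (v : X) ∈ LinearMap.range π := by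
      rw [Finsupp.range_linearCombination]
      refine Submodule.span_mono ?_ hv
      rintro z ⟨x, ⟨xs, hxs⟩, rfl⟩
      exact ⟨⟨(x, xs), hxs⟩, rfl⟩
    obtain ⟨c, hc⟩ := this
    exact ⟨c, Subtype.ext hc⟩
  obtain ⟨g, hg⟩ := π'.exists_rightInverse_of_surjective (LinearMap.range_eq_top.2 hsurj)
  have hg' : ∀ v : V, π' (g v) = v := fun v => LinearMap.congr_fun hg v
  -- L1
  have L1 : ∀ (c : ↥T →₀ ℝ) (q : ↥T),
      ψ c ⟨(q : X × (X →L[ℝ] ℝ)).1 - u, memV q⟩ = -((q.1.2 - ustar) (π c)) := by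
    intro c q
    induction c using Finsupp.induction_linear with
    | zero => simp
    | add f h hf hh => simp [map_add, hf, hh]; ring
    | single p a =>
      simp only [π, ψ, Finsupp.linearCombination_single, LinearMap.smul_apply, map_smul,
        smul_eq_mul]
      have := key p.1 p.2 q.1 q.2
      simp only [res, LinearMap.coe_comp, Function.comp_apply, Submodule.coe_subtype,
        ContinuousLinearMap.coe_coe]
      rw [this]
      ring
  -- L2
  have L2 : ∀ c d : ↥T →₀ ℝ, ψ c (π' d) = -(ψ d (π' c)) := by
    intro c d
    induction d using Finsupp.induction_linear with
    | zero => simp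
    | add f h hf hh => simp [map_add, hf, hh]; ring
    | single q b =>
      have hπ's : π' (Finsupp.single q b) = b • (⟨q.1.1 - u, memV q⟩ : V) := by
        apply Subtype.ext
        simp [hπ'c, π, Finsupp.linearCombination_single]
      rw [hπ's]
      simp only [map_smul, smul_eq_mul, ψ, Finsupp.linearCombination_single,
        LinearMap.smul_apply]
      rw [L1 c q]
      simp only [res, LinearMap.coe_comp, Function.comp_apply, Submodule.coe_subtype,
        ContinuousLinearMap.coe_coe, hπ'c]
      ring
  refine ⟨ψ.comp g, ?_, ?_⟩
  · intro v w
    have h1 : ψ (g v) (π' (g w)) = -(ψ (g w) (π' (g v))) := L2 _ _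
    rw [hg', hg'] at h1
    simpa using h1
  · intro x xstar hx v
    set q : ↥T := ⟨(x, xstar), hx⟩ with hq
    have hvq : (⟨x - u, Submodule.subset_span ⟨x, ⟨xstar, hx⟩, rfl⟩⟩ : V)
        = ⟨q.1.1 - u, memV q⟩ := rfl
    have h1 : ψ (g ⟨q.1.1 - u, memV q⟩) (π' (g v))
        = -(ψ (g v) (π' (g ⟨q.1.1 - u, memV q⟩))) := L2 _ _
    rw [hg', hg'] at h1
    rw [L1 (g v) q] at h1
    have hπv : π (g v) = (v : X) := by rw [← hπ'c, hg']
    simp only [LinearMap.coe_comp, Function.comp_apply, hvq, h1, hπv, neg_neg]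
    rfl
end

section
/- Let X be a real normed space and let T be a bimonotone multivalued operator from X to X* such that (0, 0) belongs to the graph of T. If x ∈ dom T and x₁*, x₂* ∈ T(x), then x₁* and x₂* agree on the linear span of dom T, i.e. ⟨x₁* - x₂*, v⟩ = 0 for every v in the span of dom T. -/
/-- If `T : X ⇉ X*` is bimonotone with `(0,0)` in its graph and
`x₁*, x₂* ∈ T(x)`, then `x₁*` and `x₂*` agree on the linear span of `dom T`. -/
theorem stmt4 (X : Type*) [NormedAddCommGroup X] [NormedSpace ℝ X]
    (T : Set (X × (X →L[ℝ] ℝ)))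
    (hbi : ∀ p ∈ T, ∀ q ∈ T, (p.2 - q.2) (p.1 - q.1) = 0)
    (h0 : ((0 : X), (0 : X →L[ℝ] ℝ)) ∈ T)
    (x : X) (x1star x2star : X →L[ℝ] ℝ)
    (h1 : (x, x1star) ∈ T) (h2 : (x, x2star) ∈ T) :
    ∀ v ∈ Submodule.span ℝ {y : X | ∃ ystar, (y, ystar) ∈ T},
      (x1star - x2star) v = 0 := by
  intro v hv
  have key : ∀ y ∈ {y : X | ∃ ystar, (y, ystar) ∈ T}, (x1star - x2star) y = 0 := by
    rintro y ⟨ystar, hy⟩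
    have a1 := hbi _ h1 _ hy
    have a2 := hbi _ h2 _ hy
    have b1 := hbi _ h1 _ h0
    have b2 := hbi _ h2 _ h0
    simp only [ContinuousLinearMap.sub_apply, ContinuousLinearMap.zero_apply,
      map_sub, sub_zero] at a1 a2 b1 b2 ⊢
    linarith
  have hle : Submodule.span ℝ {y : X | ∃ ystar, (y, ystar) ∈ T} ≤
      LinearMap.ker ((x1star - x2star : X →L[ℝ] ℝ) : X →ₗ[ℝ] ℝ) := by
    rw [Submodule.span_le]
    exact key
  exact hle hv
end

section
/- Let X be a real normed space and let T be a bimonotone multivalued operator from X to X* such that (0, 0) belongs to the graph of T. Let (αᵢ)_{i∈I} and (βⱼ)_{j∈J} be finite families of real numbers, xᵢ ∈ dom T with sᵢ* ∈ T(xᵢ) for each i ∈ I, and yⱼ ∈ dom T with tⱼ* ∈ T(yⱼ) for each j ∈ J. If Σᵢ αᵢ xᵢ = Σⱼ βⱼ yⱼ, then the functionals Σᵢ αᵢ sᵢ* and Σⱼ βⱼ tⱼ* agree on the linear span of dom T, i.e. ⟨Σᵢ αᵢ sᵢ* - Σⱼ βⱼ tⱼ*, v⟩ = 0 for every v in the span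 of dom T. -/
/-- For a bimonotone `T : X ⇉ X*` with `(0,0)` in its graph, if two finite
linear combinations of points of `dom T` coincide, then the corresponding linear combinations
of selections of `T` agree on the linear span of `dom T`. -/
theorem stmt5 (X : Type*) [NormedAddCommGroup X] [NormedSpace ℝ X]
    (T : Set (X × (X →L[ℝ] ℝ)))
    (hbi : ∀ p ∈ T, ∀ q ∈ T, (p.2 - q.2) (p.1 - q.1) = 0)
    (h0 : ((0 : X), (0 : X →L[ℝ] ℝ)) ∈ T)
    (I J : Type*) [Fintype I] [Fintype J]
    (α : I → ℝ) (β : J → ℝ) (x : I → X) (y : J → X)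
    (s : I → (X →L[ℝ] ℝ)) (t : J → (X →L[ℝ] ℝ))
    (hs : ∀ i, (x i, s i) ∈ T) (ht : ∀ j, (y j, t j) ∈ T)
    (hsum : ∑ i, α i • x i = ∑ j, β j • y j) :
    ∀ v ∈ Submodule.span ℝ {z : X | ∃ zstar, (z, zstar) ∈ T},
      ((∑ i, α i • s i) - ∑ j, β j • t j) v = 0 := by
  have hself : ∀ p ∈ T, p.2 p.1 = 0 := by
    intro p hp
    have := hbi p hp _ h0
    simpa using this
  have hpair : ∀ p ∈ T, ∀ q ∈ T, p.2 q.1 = - q.2 p.1 := by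
    intro p hp q hq
    have h1 := hbi p hp q hq
    have h2 := hself p hp
    have h3 := hself q hq
    simp only [ContinuousLinearMap.sub_apply, map_sub] at h1
    linarith
  set f : X →L[ℝ] ℝ := (∑ i, α i • s i) - ∑ j, β j • t j with hf
  have key : ∀ z ∈ {z : X | ∃ zstar, (z, zstar) ∈ T}, f z = 0 := by
    rintro z ⟨zs, hz⟩
    have hsz : ∀ i, s i z = - zs (x i) := fun i => hpair (x i, s i) (hs i) (z, zs) hz
    have htz : ∀ j, t j z = - zs (y j) := fun j => hpair (y j, t j) (ht j) (z, zs) hz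
    have h1 : zs (∑ i, α i • x i) = zs (∑ j, β j • y j) := by rw [hsum]
    simp only [map_sum, map_smul, smul_eq_mul] at h1
    simp only [hf, ContinuousLinearMap.sub_apply, ContinuousLinearMap.sum_apply,
      ContinuousLinearMap.smul_apply, hsz, htz, smul_eq_mul]
    simp only [mul_neg, Finset.sum_neg_distrib]
    linarith
  have hle : Submodule.span ℝ {z : X | ∃ zstar, (z, zstar) ∈ T} ≤ LinearMap.ker (f : X →ₗ[ℝ] ℝ) := by
    rw [Submodule.span_le]
    intro z hz
    exact LinearMap.mem_ker.mpr (key z hz)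
  intro v hv
  exact hle hv
end
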